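/- Let S be a closed subspace of ℓ∞ containing c₀. If S (with the induced norm) is a Grothendieck space, then S is an ℓ∞-Grothendieck subspace. -/

import Mathlib

open Filter Topology MeasureTheory
open scoped ENNReal

noncomputable section
set_option maxHeartbeats 1000000
set_option synthInstance.maxHeartbeats 400000

/-- A Banach space `X` has weak*-sequentially compact dual ball if every sequence in the
closed unit ball of `X*` has a weak*-convergent subsequence. -/
def WStarSeqCompactDualBall (X : Type*) [SeminormedAddCommGroup X] [NormedSpace ℝ X] : Prop :=
  ∀ f : ℕ → (X →L[ℝ] ℝ), (∀ n, ‖f n‖ ≤ 1) →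
    ∃ φ : ℕ → ℕ, StrictMono φ ∧ ∃ g : X →L[ℝ] ℝ,
      ∀ x : X, Tendsto (fun k => f (φ k) x) atTop (nhds (g x))

/-- A Banach space `X` is a Grothendieck space if every weak*-convergent sequence in `X*`
is weakly convergent. -/
def GrothendieckSpace (X : Type*) [SeminormedAddCommGroup X] [NormedSpace ℝ X] : Prop :=
  ∀ (f : ℕ → (X →L[ℝ] ℝ)) (g : X →L[ℝ] ℝ),
    (∀ x : X, Tendsto (fun n => f n x) atTop (nhds (g x))) →
    ∀ F : (X →L[ℝ] ℝ) →L[ℝ] ℝ, Tendsto (fun n => F (f n)) atTop (nhds (F g))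

/-- An operator is weakly compact if the closure of the image of the closed unit ball is
compact in the weak topology of the codomain. -/
def IsWeaklyCompactOp {X Y : Type*} [SeminormedAddCommGroup X] [NormedSpace ℝ X]
    [SeminormedAddCommGroup Y] [NormedSpace ℝ Y] (T : X →L[ℝ] Y) : Prop :=
  IsCompact (closure (toWeakSpace ℝ Y '' (T '' Metric.closedBall (0:X) 1)))

/-- `ℓ¹`, the space of absolutely summable real sequences. -/
abbrev ellOne : Type := ↥(lp (fun _ : ℕ => ℝ) 1)

/-- Two normed spaces are isomorphic if there is a continuous linear bijection between them
with continuous inverse. -/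
def IsomorphicBanach (X Y : Type*) [SeminormedAddCommGroup X] [NormedSpace ℝ X]
    [SeminormedAddCommGroup Y] [NormedSpace ℝ Y] : Prop :=
  Nonempty (X ≃L[ℝ] Y)

/-- `ℓ∞`, the space of bounded real sequences with the sup norm. -/
abbrev ellInfty : Type := ↥(lp (fun _ : ℕ => ℝ) ∞)

/-- `c₀`, the subspace of `ℓ∞` of sequences converging to `0`. -/
def cZero : Submodule ℝ ellInfty where
  carrier := {x | Tendsto (fun i => (x : ℕ → ℝ) i) atTop (nhds 0)}
  zero_mem' := by
    simpa [lp.coeFn_zero] using (tendsto_const_nhds : Tendsto (fun _ : ℕ => (0:ℝ)) atTop (nhds 0))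
  add_mem' := by
    intro x y hx hy
    have := hx.add hy
    simpa [lp.coeFn_add] using this
  smul_mem' := by
    intro c x hx
    have := hx.const_mul c
    simpa [lp.coeFn_smul, smul_eq_mul] using this

/-- The `i`-th standard unit vector in `ℓ∞`. -/
def eVec (i : ℕ) : ellInfty := lp.single ∞ i 1

lemma eVec_mem_cZero (i : ℕ) : eVec i ∈ cZero := by
  have h : (fun n => (eVec i : ℕ → ℝ) n) =ᶠ[atTop] fun _ => (0:ℝ) := by
    filter_upwards [eventually_gt_atTop i] with n hn
    simp [eVec, lp.single_apply, hn.ne']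
  exact Tendsto.congr' h.symm tendsto_const_nhds

/-- The `i`-th standard unit vector, as an element of a subspace `S` of `ℓ∞` containing `c₀`. -/
def eIn (S : Submodule ℝ ellInfty) (hS : cZero ≤ S) (i : ℕ) : ↥S :=
  ⟨eVec i, hS (eVec_mem_cZero i)⟩

/-- A sequence `(fₙ)` in `S*` is `σ(S*,ℓ∞)`-convergent to `g` if, testing against the unit
vectors `eᵢ`, it converges against every bounded real sequence `z`. -/
def SigmaLinfConv (S : Submodule ℝ ellInfty) (hS : cZero ≤ S)
    (f : ℕ → (↥S →L[ℝ] ℝ)) (g : ↥S →L[ℝ] ℝ) : Prop :=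
  ∀ z : ℕ → ℝ, (∃ C : ℝ, ∀ i, |z i| ≤ C) →
    Tendsto (fun n => ∑' i, z i * f n (eIn S hS i)) atTop
      (nhds (∑' i, z i * g (eIn S hS i)))

/-- `S` is an `ℓ∞`-Grothendieck subspace if it contains `c₀` and every weak*-convergent
sequence in `S*` is `σ(S*,ℓ∞)`-convergent. -/
def IsLinfGrothendieck (S : Submodule ℝ ellInfty) : Prop :=
  ∃ hS : cZero ≤ S, ∀ (f : ℕ → (↥S →L[ℝ] ℝ)) (g : ↥S →L[ℝ] ℝ),
    (∀ x : ↥S, Tendsto (fun n => f n x) atTop (nhds (g x))) →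
    SigmaLinfConv S hS f g


lemma finsum_abs_le (S : Submodule ℝ ellInfty) (hS : cZero ≤ S)
    (f : ↥S →L[ℝ] ℝ) (A : Finset ℕ) :
    ∑ i ∈ A, |f (eIn S hS i)| ≤ ‖f‖ := by
  classical
  set ε : ℕ → ℝ := fun i => if 0 ≤ f (eIn S hS i) then 1 else -1 with hε
  set x : ↥S := ∑ i ∈ A, ε i • eIn S hS i with hx
  have hfx : f x = ∑ i ∈ A, |f (eIn S hS i)| := by
    rw [hx, map_sum]
    refine Finset.sum_congr rfl fun i _ => ?_
    rw [_root_.map_smul]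
    by_cases h : 0 ≤ f (eIn S hS i)
    · simp [hε, h, abs_of_nonneg h, smul_eq_mul]
    · simp [hε, h, abs_of_neg (lt_of_not_ge h), smul_eq_mul]
  have hxnorm : ‖x‖ ≤ 1 := by
    have hcoe : ((x : ellInfty) : ℕ → ℝ) = fun j => if j ∈ A then ε j else 0 := by
      have : (x : ellInfty) = ∑ i ∈ A, ε i • (eVec i : ellInfty) := by
        rw [hx]; push_cast; rfl
      rw [this, lp.coeFn_sum]
      funext j
      simp only [Finset.sum_apply, lp.coeFn_smul, Pi.smul_apply, smul_eq_mul]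
      have : ∀ i ∈ A, ε i * (eVec i : ℕ → ℝ) j = if i = j then ε j else 0 := by
        intro i _
        by_cases h : i = j
        · subst h; simp [eVec, lp.single_apply_self]
        · simp [eVec, lp.single_apply_ne ∞ i _ (Ne.symm h), h]
      rw [Finset.sum_congr rfl this, Finset.sum_ite_eq' A j (fun _ => ε j)]
    have : ‖(x : ellInfty)‖ ≤ 1 := by
      apply lp.norm_le_of_forall_le zero_le_one
      intro j
      rw [hcoe]
      by_cases h : j ∈ A
      · simp only [h, if_true]
        by_cases h' : 0 ≤ f (eIn S hS j) <;>
          simp only [hε, h', if_true, if_false, Real.norm_eq_abs, abs_one, abs_neg, le_refl]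
      · simp [h]
    exact this
  calc ∑ i ∈ A, |f (eIn S hS i)| = f x := hfx.symm
    _ ≤ |f x| := le_abs_self _
    _ ≤ ‖f‖ * ‖x‖ := f.le_opNorm x
    _ ≤ ‖f‖ * 1 := by
        exact mul_le_mul_of_nonneg_left hxnorm (norm_nonneg f)
    _ = ‖f‖ := mul_one _

lemma summable_abs_eIn (S : Submodule ℝ ellInfty) (hS : cZero ≤ S)
    (f : ↥S →L[ℝ] ℝ) : Summable (fun i => |f (eIn S hS i)|) :=
  summable_of_sum_range_le (fun _ => abs_nonneg _)
    (fun n => finsum_abs_le S hS f (Finset.range n))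

lemma tsum_abs_eIn_le (S : Submodule ℝ ellInfty) (hS : cZero ≤ S)
    (f : ↥S →L[ℝ] ℝ) : ∑' i, |f (eIn S hS i)| ≤ ‖f‖ :=
  Summable.tsum_le_of_sum_le (summable_abs_eIn S hS f) (fun A => finsum_abs_le S hS f A)

lemma summable_z_eIn (S : Submodule ℝ ellInfty) (hS : cZero ≤ S)
    (f : ↥S →L[ℝ] ℝ) {z : ℕ → ℝ} {C : ℝ} (hz : ∀ i, |z i| ≤ C) :
    Summable (fun i => z i * f (eIn S hS i)) := by
  apply Summable.of_norm_bounded ((summable_abs_eIn S hS f).mul_left C)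
  intro i
  rw [Real.norm_eq_abs, abs_mul]
  exact mul_le_mul_of_nonneg_right (hz i) (abs_nonneg _)


lemma exists_F {X : Type*} [NormedAddCommGroup X] [NormedSpace ℝ X] (e : ℕ → X)
    (habs : ∀ h : X →L[ℝ] ℝ, Summable (fun i => |h (e i)|))
    (htsum : ∀ h : X →L[ℝ] ℝ, ∑' i, |h (e i)| ≤ ‖h‖)
    (z : ℕ → ℝ) (C : ℝ) (hzC : ∀ i, |z i| ≤ C) (hC0 : 0 ≤ C) :
    ∃ F : (X →L[ℝ] ℝ) →L[ℝ] ℝ, ∀ h : X →L[ℝ] ℝ,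
      F h = ∑' i, z i * h (e i) := by
  have hsum : ∀ h : X →L[ℝ] ℝ, Summable (fun i => z i * h (e i)) := by
    intro h
    apply Summable.of_norm_bounded ((habs h).mul_left C)
    intro i
    rw [Real.norm_eq_abs, abs_mul]
    exact mul_le_mul_of_nonneg_right (hzC i) (abs_nonneg _)
  let Flin : (X →L[ℝ] ℝ) →ₗ[ℝ] ℝ :=
    { toFun := fun h => ∑' i, z i * h (e i)
      map_add' := by
        intro a b
        rw [← Summable.tsum_add (hsum a) (hsum b)]
        simp [mul_add]
      map_smul' := by
        intro c a
        show (∑' i, z i * (c • a) (e i)) = c • ∑' i, z i * a (e i)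
        rw [smul_eq_mul, ← tsum_mul_left]
        congr 1; funext i
        rw [ContinuousLinearMap.smul_apply, smul_eq_mul]; ring }
  have hbound : ∀ h : X →L[ℝ] ℝ, ‖Flin h‖ ≤ C * ‖h‖ := by
    intro h
    have h1 : ‖Flin h‖ ≤ ∑' i, ‖z i * h (e i)‖ :=
      norm_tsum_le_tsum_norm ((hsum h).norm)
    have h2 : ∑' i, ‖z i * h (e i)‖ ≤ ∑' i, C * |h (e i)| := by
      apply Summable.tsum_le_tsum _ (hsum h).norm ((habs h).mul_left C)
      intro i
      rw [Real.norm_eq_abs, abs_mul]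
      exact mul_le_mul_of_nonneg_right (hzC i) (abs_nonneg _)
    have h3 : ∑' i, C * |h (e i)| = C * ∑' i, |h (e i)| := tsum_mul_left
    have h4 : C * ∑' i, |h (e i)| ≤ C * ‖h‖ :=
      mul_le_mul_of_nonneg_left (htsum h) hC0
    linarith
  exact ⟨Flin.mkContinuous C hbound, fun h => rfl⟩

/-- a closed subspace of `ℓ∞` containing `c₀` which is a Grothendieck space is
an `ℓ∞`-Grothendieck subspace. -/
theorem linfGrothendieck_of_grothendieck
    (S : Submodule ℝ ellInfty) (hcl : IsClosed (S : Set ellInfty))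
    (hS : cZero ≤ S)
    (hG : GrothendieckSpace ↥S) :
    IsLinfGrothendieck S := by
  refine ⟨hS, fun f g hconv => ?_⟩
  intro z hz
  obtain ⟨C, hzC⟩ := hz
  have hC0 : 0 ≤ C := le_trans (abs_nonneg (z 0)) (hzC 0)
  obtain ⟨F, hF⟩ := exists_F (eIn S hS) (summable_abs_eIn S hS) (tsum_abs_eIn_le S hS) z C hzC hC0
  have := hG f g hconv F
  simp only [hF] at this
  exact this
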